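/- Let ω₁,…,ω_{d+1} ∈ ℝᵈ, let Ω' ∈ Mat(d,d) have i-th column ω_i − ω_{d+1}, let M = I + (√(d+1) − 1)·𝟏𝟏ᵀ, and set Ω_M = Ω'·M⁻¹. Then Ω_M·Ω_Mᵀ = (d+1)·V, where V is the covariance matrix of the random vector taking each value ω_i with probability 1/(d+1). -/

import Mathlib

open Matrix

lemma aux_sum (n : ℕ) (x y : Fin (n + 1) → ℝ) :
    (∑ j : Fin n, (x j.castSucc - x (Fin.last n)) * (y j.castSucc - y (Fin.last n)))
      - (1 / ((n : ℝ) + 1)) * (∑ j : Fin n, (x j.castSucc - x (Fin.last n)))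
        * (∑ j : Fin n, (y j.castSucc - y (Fin.last n)))
    = (∑ i, x i * y i) - (1 / ((n : ℝ) + 1)) * (∑ i, x i) * (∑ i, y i) := by
  have hn : ((n : ℝ) + 1) ≠ 0 := by positivity
  have h1 : (∑ j : Fin n, (x j.castSucc - x (Fin.last n)) * (y j.castSucc - y (Fin.last n)))
      = ∑ i : Fin (n+1), (x i - x (Fin.last n)) * (y i - y (Fin.last n)) := by
    rw [Fin.sum_univ_castSucc]; simp
  have h2 : (∑ j : Fin n, (x j.castSucc - x (Fin.last n)))
      = ∑ i : Fin (n+1), (x i - x (Fin.last n)) := by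
    rw [Fin.sum_univ_castSucc]; simp
  have h3 : (∑ j : Fin n, (y j.castSucc - y (Fin.last n)))
      = ∑ i : Fin (n+1), (y i - y (Fin.last n)) := by
    rw [Fin.sum_univ_castSucc]; simp
  have e1 : ∑ i : Fin (n+1), (x i - x (Fin.last n)) * (y i - y (Fin.last n))
      = (∑ i, x i * y i) - x (Fin.last n) * (∑ i, y i) - y (Fin.last n) * (∑ i, x i)
        + ((n : ℝ) + 1) * (x (Fin.last n) * y (Fin.last n)) := by
    simp only [sub_mul, mul_sub, Finset.sum_sub_distrib, ← Finset.mul_sum, ← Finset.sum_mul,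
      Finset.sum_const, Finset.card_univ, Fintype.card_fin, nsmul_eq_mul]
    push_cast
    ring
  have e2 : ∑ i : Fin (n+1), (x i - x (Fin.last n))
      = (∑ i, x i) - ((n : ℝ) + 1) * x (Fin.last n) := by
    simp only [Finset.sum_sub_distrib, Finset.sum_const, Finset.card_univ, Fintype.card_fin,
      nsmul_eq_mul]
    push_cast
    ring
  have e3 : ∑ i : Fin (n+1), (y i - y (Fin.last n))
      = (∑ i, y i) - ((n : ℝ) + 1) * y (Fin.last n) := by
    simp only [Finset.sum_sub_distrib, Finset.sum_const, Finset.card_univ, Fintype.card_fin,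
      nsmul_eq_mul]
    push_cast
    ring
  rw [h1, h2, h3, e1, e2, e3]
  field_simp
  ring

theorem stmt_6 (d : ℕ) (hd : 1 ≤ d) (ω : Fin (d + 1) → Fin d → ℝ)
    (M : Matrix (Fin d) (Fin d) ℝ)
    (hM : M = 1 + (Real.sqrt (d + 1) - 1) • Matrix.of (fun _ _ => (1 : ℝ) / d))
    (Ω' : Matrix (Fin d) (Fin d) ℝ)
    (hΩ' : ∀ r i, Ω' r i = ω i.castSucc r - ω (Fin.last d) r)
    (ΩM : Matrix (Fin d) (Fin d) ℝ) (hΩM : ΩM = Ω' * M⁻¹)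
    (μ : Fin d → ℝ) (hμ : μ = (1 / ((d : ℝ) + 1)) • ∑ i, ω i)
    (V : Matrix (Fin d) (Fin d) ℝ)
    (hV : V = (1 / ((d : ℝ) + 1)) • ∑ i, vecMulVec (ω i) (ω i) - vecMulVec μ μ) :
    ΩM * ΩMᵀ = ((d : ℝ) + 1) • V := by
  have hd0 : (d : ℝ) ≠ 0 := by
    have : (0:ℝ) < d := by exact_mod_cast hd
    linarith
  have hdp : ((d : ℝ) + 1) ≠ 0 := by positivity
  set E : Matrix (Fin d) (Fin d) ℝ := Matrix.of (fun _ _ => (1 : ℝ) / d) with hE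
  set a : ℝ := Real.sqrt (d + 1) - 1 with ha
  have hEE : E * E = E := by
    ext r s
    simp only [hE, mul_apply, of_apply, Finset.sum_const, Finset.card_univ, Fintype.card_fin,
      nsmul_eq_mul]
    field_simp
  have hsq : a + (a + a * a) = (d : ℝ) := by
    have h1 : Real.sqrt ((d:ℝ) + 1) * Real.sqrt ((d:ℝ) + 1) = (d:ℝ) + 1 :=
      Real.mul_self_sqrt (by positivity)
    rw [ha]; nlinarith [h1]
  have hMME : ∀ c : ℝ, (1 + c • E) * E = (1 + c) • E := by
    intro c
    rw [add_mul, one_mul, smul_mul_assoc, hEE, add_smul, one_smul]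
  have hEMM : ∀ c : ℝ, E * (1 + c • E) = (1 + c) • E := by
    intro c
    rw [mul_add, mul_one, mul_smul_comm, hEE, add_smul, one_smul]
  have hMM : M * M = 1 + (d : ℝ) • E := by
    have h : (1 + a • E) * (1 + a • E) = 1 + (a + (a + a * a)) • E := by
      rw [mul_add, mul_one, add_mul, one_mul, smul_mul_assoc, mul_smul_comm, hEE, smul_smul,
        add_smul, add_smul]
      abel
    rw [hM, h, hsq]
  set N : Matrix (Fin d) (Fin d) ℝ := 1 - ((d:ℝ)/((d:ℝ)+1)) • E with hN
  have hcc : (d:ℝ)/((d:ℝ)+1) * (1 + (d:ℝ)) = (d:ℝ) := by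
    rw [div_mul_eq_mul_div, div_eq_iff hdp]; ring
  have hMMN : (1 + (d : ℝ) • E) * N = 1 := by
    rw [hN, mul_sub, mul_one, mul_smul_comm, hMME, smul_smul, hcc, add_sub_cancel_right]
  have hNMM : N * (1 + (d : ℝ) • E) = 1 := by
    rw [hN, sub_mul, one_mul, smul_mul_assoc, hEMM, smul_smul, hcc, add_sub_cancel_right]
  have hMinv : M⁻¹ = M * N := by
    apply Matrix.inv_eq_right_inv
    rw [← mul_assoc, hMM, hMMN]
  have hMinv' : M⁻¹ = N * M := by
    apply Matrix.inv_eq_left_inv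
    rw [mul_assoc, hMM, hNMM]
  have hNN : M⁻¹ * M⁻¹ = N := by
    nth_rewrite 1 [hMinv']
    nth_rewrite 1 [hMinv]
    rw [mul_assoc, ← mul_assoc M M N, hMM, hMMN, mul_one]
  have hMsymm : Mᵀ = M := by
    rw [hM, transpose_add, transpose_smul, transpose_one]
    congr 1
  have hMinvT : (M⁻¹)ᵀ = M⁻¹ := by
    rw [Matrix.transpose_nonsing_inv, hMsymm]
  have key : ΩM * ΩMᵀ = Ω' * N * Ω'ᵀ := by
    rw [hΩM, transpose_mul, hMinvT, mul_assoc, ← mul_assoc M⁻¹, hNN, mul_assoc, ← mul_assoc]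
  rw [key, hV]
  have hNentry : ∀ R : Fin d, ∀ j : Fin d, (Ω' * N) R j
      = Ω' R j - (1 / ((d:ℝ)+1)) * ∑ i, Ω' R i := by
    intro R j
    rw [hN, mul_sub, mul_one, Matrix.mul_smul, Matrix.sub_apply, Matrix.smul_apply]
    have : (Ω' * E) R j = (∑ i, Ω' R i) * (1 / (d:ℝ)) := by
      rw [mul_apply, Finset.sum_mul]
      simp [hE]
    rw [this, smul_eq_mul]
    field_simp
  ext r s
  rw [mul_apply]
  simp only [transpose_apply, hNentry]
  have L1 : ∑ j, (Ω' r j - (1 / ((d:ℝ)+1)) * ∑ i, Ω' r i) * Ω' s j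
      = (∑ j, Ω' r j * Ω' s j)
        - (1 / ((d:ℝ)+1)) * (∑ i, Ω' r i) * (∑ j, Ω' s j) := by
    simp only [sub_mul, Finset.sum_sub_distrib]
    rw [← Finset.mul_sum, mul_assoc]
  rw [L1]
  simp only [hΩ']
  rw [aux_sum d (fun i => ω i r) (fun i => ω i s)]
  simp only [Matrix.smul_apply, Matrix.sub_apply, Matrix.sum_apply, vecMulVec_apply, hμ, Pi.smul_apply,
    Finset.sum_apply, smul_eq_mul]
  field_simp
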